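/- Let a ∈ ℝ with a < −2^{5/4}, and let a₁₂₁, a₂₁₁ ∈ ℝ be free parameters. Define the constants C₁ = −(3/16)(3a⁴+4a²+44), C₂ = −(a/48)(3a⁴+12a²+116), C₃ = −(1/8)(a⁴+2a²+5), C₄ = −(1/16)(9a⁴−20a²+172), C₅ = −(3a/8)(3a²−8), C₆ = −(a/12)(a²−120), C₇ = −(1/8)(3a²−80), and set (center condition S¹c⁸): a₀₃₁ = 0, b₂₁₁ = 0, b₁₂₁ = (7/2)a₂₁₁, b₀₂₁ = −6a₁₂₁, b₀₃₁ = (8/3)a₁₂₁, b₁₁₁ = 9a·a₁₂₁ + (9/2)a₂₁₁, b₁₀₁ = C₂a₁₂₁ + C₃a₂₁₁, b₂₀₁ = C₄a₁₂₁ + C₅a₂₁₁, b₃₀₁ = C₆a₁₂₁ + C₇a₂₁₁, b₀₁₁ = C₁a₁₂₁ − (9/8)a³a₂₁₁, a₀₀₁ = (1/64)(a²+2)[2a(a²+2)a₁₂₁ + 4a²a₂₁₁], b₀₀₁ = (1/64){8a³b₃₀₁ + 16a(2b₁₀₁ − a b₂₀₁) + 4(a²+2)(4b₀₁₁ − 2a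 b₁₁₁ + a²b₂₁₁) − (a²+2)²[4b₀₂₁ − 2a b₁₂₁ − (a²+2)b₀₃₁]}. Define the perturbations p₁(x,y) = a₀₀₁ + a₂₁₁x²y + a₁₂₁xy² and q₁(x,y) = b₀₀₁ + b₁₀₁x + b₀₁₁y + b₂₀₁x² + b₁₁₁xy + b₀₂₁y² + b₃₀₁x³ + b₂₁₁x²y + b₁₂₁xy² + b₀₃₁y³, and set N(x,y,ε) = f₁(x,y) + ε·(a₁₂₁r₁(x,y) + a₂₁₁r₂(x,y)) and D(x,y,ε) = f₂(x,y) + ε·(a₁₂₁r₃(x,y) + a₂₁₁r₄(x,y)) with r₁, r₂, r₃, r₄ as in the context. Then the polynomial in (x,y,ε) given by 5·D·[(P+εp₁)·∂N/∂x + (Q+εq₁)·∂N/∂y] − 4·N·[(P+εp₁)·∂D/∂x + (Q+εq₁)·∂D/∂y] has identically vanishing coefficients at ε⁰ and ε¹; equivalently, the Lie derivative of H₁ = N⁵/D⁴ along the perturbed vector field (P+εp₁, Q+εq₁) is O(ε²), so H₁ is an ε-order approximate first integral and the perturbed system is a center up to ε-order under the condition S¹c⁸. -/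

import Mathlib

noncomputable section

/-- The `x`-component of the unperturbed Żołądek cubic vector field. -/
def P₀ (a x y : ℝ) : ℝ := a + 5/2 * x + x * y + x^3

/-- The `y`-component of the unperturbed Żołądek cubic vector field. -/
def Q₀ (a x y : ℝ) : ℝ := -2*a*x + 2*y - 3*x^2 + 4*y^2 - a*x^3 + 6*x^2*y

/-- The invariant algebraic curve `f₁`. -/
def f₁ (x y : ℝ) : ℝ := x^4 + 4*x^2 + 4*y

/-- The invariant algebraic curve `f₂`. -/
def f₂ (a x y : ℝ) : ℝ := x^5 + 5*x^3 + 5*x*y + 5/2 * x + a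

/-- Constant `C₁`. -/
def C1 (a : ℝ) : ℝ := -(3/16)*(3*a^4 + 4*a^2 + 44)
/-- Constant `C₂`. -/
def C2 (a : ℝ) : ℝ := -(a/48)*(3*a^4 + 12*a^2 + 116)
/-- Constant `C₃`. -/
def C3 (a : ℝ) : ℝ := -(1/8)*(a^4 + 2*a^2 + 5)
/-- Constant `C₄`. -/
def C4 (a : ℝ) : ℝ := -(1/16)*(9*a^4 - 20*a^2 + 172)
/-- Constant `C₅`. -/
def C5 (a : ℝ) : ℝ := -(3*a/8)*(3*a^2 - 8)
/-- Constant `C₆`. -/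
def C6 (a : ℝ) : ℝ := -(a/12)*(a^2 - 120)
/-- Constant `C₇`. -/
def C7 (a : ℝ) : ℝ := -(1/8)*(3*a^2 - 80)

/-- `a₀₃₁ = 0` (center condition `S¹c⁸`). -/
def a031 : ℝ := 0
/-- `b₂₁₁ = 0`. -/
def b211 : ℝ := 0
/-- `b₁₂₁ = (7/2)a₂₁₁`. -/
def b121 (a211 : ℝ) : ℝ := (7/2)*a211
/-- `b₀₂₁ = −6a₁₂₁`. -/
def b021 (a121 : ℝ) : ℝ := -6*a121
/-- `b₀₃₁ = (8/3)a₁₂₁`. -/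
def b031 (a121 : ℝ) : ℝ := (8/3)*a121
/-- `b₁₁₁ = 9a·a₁₂₁ + (9/2)a₂₁₁`. -/
def b111 (a a121 a211 : ℝ) : ℝ := 9*a*a121 + (9/2)*a211
/-- `b₁₀₁ = C₂a₁₂₁ + C₃a₂₁₁`. -/
def b101 (a a121 a211 : ℝ) : ℝ := C2 a * a121 + C3 a * a211
/-- `b₂₀₁ = C₄a₁₂₁ + C₅a₂₁₁`. -/
def b201 (a a121 a211 : ℝ) : ℝ := C4 a * a121 + C5 a * a211
/-- `b₃₀₁ = C₆a₁₂₁ + C₇a₂₁₁`. -/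
def b301 (a a121 a211 : ℝ) : ℝ := C6 a * a121 + C7 a * a211
/-- `b₀₁₁ = C₁a₁₂₁ − (9/8)a³a₂₁₁`. -/
def b011 (a a121 a211 : ℝ) : ℝ := C1 a * a121 - (9/8)*a^3*a211
/-- `a₀₀₁ = (1/64)(a²+2)[2a(a²+2)a₁₂₁ + 4a²a₂₁₁]`. -/
def a001 (a a121 a211 : ℝ) : ℝ := (1/64)*(a^2+2)*(2*a*(a^2+2)*a121 + 4*a^2*a211)
/-- `b₀₀₁` from constraint (21). -/
def b001 (a a121 a211 : ℝ) : ℝ :=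
  (1/64)*(8*a^3*(b301 a a121 a211) + 16*a*(2*(b101 a a121 a211) - a*(b201 a a121 a211))
    + 4*(a^2+2)*(4*(b011 a a121 a211) - 2*a*(b111 a a121 a211) + a^2*b211)
    - (a^2+2)^2*(4*(b021 a121) - 2*a*(b121 a211) - (a^2+2)*(b031 a121)))

/-- The ε-order perturbation `p₁(x,y) = a₀₀₁ + a₂₁₁x²y + a₁₂₁xy²`. -/
def p1 (a a121 a211 x y : ℝ) : ℝ := a001 a a121 a211 + a211*x^2*y + a121*x*y^2

/-- The ε-order perturbation `q₁(x,y)`. -/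
def q1 (a a121 a211 x y : ℝ) : ℝ :=
  b001 a a121 a211 + b101 a a121 a211 * x + b011 a a121 a211 * y
    + b201 a a121 a211 * x^2 + b111 a a121 a211 * x*y + b021 a121 * y^2
    + b301 a a121 a211 * x^3 + b211 * x^2*y + b121 a211 * x*y^2 + b031 a121 * y^3

/-- Correction polynomial `r₁`. -/
def r1 (a x y : ℝ) : ℝ :=
  -(1/48)*(a^2*(3*a^2+4)*(5 + 2*y + 2*x^2 + x^4) + 220 - 192*a*x + 280*y
    + 120*x^2 - 64*y^2 + 128*a*x^3 + 64*x^2*y + 76*x^4)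

/-- Correction polynomial `r₂`. -/
def r2 (a x y : ℝ) : ℝ :=
  -(1/8)*a*(5*a^2-4) + 5*x - (1/8)*a*(a^2-4)*(2*y + 2*x^2 + x^4) + 2*x*y - 2*x^3

/-- Correction polynomial `r₃`. -/
def r3 (a x y : ℝ) : ℝ :=
  (1/192)*(a^2*(3*a^2+4)*(4*a - 15*x + 10*x*y + 10*x^3) + 304*a + 16*a^3 - 180*x
    - 40*(16*a*y - 8*a*x^2 + 5*x*y - 23*x^3 - 8*x*y^2 + 16*a*x^4 + 8*x^3*y))

/-- Correction polynomial `r₄`. -/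
def r4 (a x y : ℝ) : ℝ :=
  (a^2/8)*(a^2-1) - a*((15/32)*a^2 + 5/8)*x + (5/2)*x^2*((3/2) + y - x^2)
    + (5/16)*a*(a^2-4)*x*(y + x^2)

/-- Numerator `N = f₁ + ε(a₁₂₁r₁ + a₂₁₁r₂)` of the approximate first integral `H₁ = N⁵/D⁴`. -/
def Nfun (a a121 a211 x y ε : ℝ) : ℝ :=
  f₁ x y + ε*(a121 * r1 a x y + a211 * r2 a x y)

/-- Denominator `D = f₂ + ε(a₁₂₁r₃ + a₂₁₁r₄)` of the approximate first integral `H₁ = N⁵/D⁴`. -/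
def Dfun (a a121 a211 x y ε : ℝ) : ℝ :=
  f₂ a x y + ε*(a121 * r3 a x y + a211 * r4 a x y)

/-- `Φ = 5·D·[(P+εp₁)·∂N/∂x + (Q+εq₁)·∂N/∂y] − 4·N·[(P+εp₁)·∂D/∂x + (Q+εq₁)·∂D/∂y]`,
namely `D⁵/N⁴` times the Lie derivative of `H₁ = N⁵/D⁴` along `(P+εp₁, Q+εq₁)`. -/
def Φ (a a121 a211 x y ε : ℝ) : ℝ :=
  5 * Dfun a a121 a211 x y ε *
    ((P₀ a x y + ε * p1 a a121 a211 x y) * deriv (fun x' => Nfun a a121 a211 x' y ε) x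
      + (Q₀ a x y + ε * q1 a a121 a211 x y) * deriv (fun y' => Nfun a a121 a211 x y' ε) y)
  - 4 * Nfun a a121 a211 x y ε *
    ((P₀ a x y + ε * p1 a a121 a211 x y) * deriv (fun x' => Dfun a a121 a211 x' y ε) x
      + (Q₀ a x y + ε * q1 a a121 a211 x y) * deriv (fun y' => Dfun a a121 a211 x y' ε) y)

private lemma deriv_poly5 (c0 c1 c2 c3 c4 c5 t : ℝ) :
    deriv (fun s : ℝ => c0 + c1*s + c2*s^2 + c3*s^3 + c4*s^4 + c5*s^5) t
      = c1 + 2*c2*t + 3*c3*t^2 + 4*c4*t^3 + 5*c5*t^4 := by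
  have h : HasDerivAt (fun s : ℝ => c0 + c1*s + c2*s^2 + c3*s^3 + c4*s^4 + c5*s^5)
      (c1 + 2*c2*t + 3*c3*t^2 + 4*c4*t^3 + 5*c5*t^4) t := by
    have h1 : HasDerivAt (fun s : ℝ => s) 1 t := hasDerivAt_id t
    have h2 := (((((hasDerivAt_const t c0).add (h1.const_mul c1)).add
        ((hasDerivAt_pow 2 t).const_mul c2)).add
        ((hasDerivAt_pow 3 t).const_mul c3)).add
        ((hasDerivAt_pow 4 t).const_mul c4)).add
        ((hasDerivAt_pow 5 t).const_mul c5)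
    refine h2.congr_deriv ?_
    push_cast
    ring
  exact h.deriv

private lemma deriv_bilinear (k1 k2 Pv pv Qv qv u0 u1 v0 v1 w0 w1 s0 s1 z0 z1 : ℝ) :
    deriv (fun ε : ℝ => 5*(k1 + ε*k2)*((Pv + ε*pv)*(u0 + ε*u1) + (Qv + ε*qv)*(v0 + ε*v1))
      - 4*(w0 + ε*w1)*((Pv + ε*pv)*(s0 + ε*s1) + (Qv + ε*qv)*(z0 + ε*z1))) 0
    = 5*k2*(Pv*u0 + Qv*v0) + 5*k1*(pv*u0 + Pv*u1 + qv*v0 + Qv*v1)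
      - 4*w1*(Pv*s0 + Qv*z0) - 4*w0*(pv*s0 + Pv*s1 + qv*z0 + Qv*z1) := by
  rw [show (fun ε : ℝ => 5*(k1 + ε*k2)*((Pv + ε*pv)*(u0 + ε*u1) + (Qv + ε*qv)*(v0 + ε*v1))
      - 4*(w0 + ε*w1)*((Pv + ε*pv)*(s0 + ε*s1) + (Qv + ε*qv)*(z0 + ε*z1)))
    = (fun s : ℝ => (5*k1*(Pv*u0 + Qv*v0) - 4*w0*(Pv*s0 + Qv*z0))
      + (5*k2*(Pv*u0 + Qv*v0) + 5*k1*(pv*u0 + Pv*u1 + qv*v0 + Qv*v1)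
        - 4*w1*(Pv*s0 + Qv*z0) - 4*w0*(pv*s0 + Pv*s1 + qv*z0 + Qv*z1))*s
      + (5*k1*(pv*u1 + qv*v1) + 5*k2*(pv*u0 + Pv*u1 + qv*v0 + Qv*v1)
        - 4*w0*(pv*s1 + qv*z1) - 4*w1*(pv*s0 + Pv*s1 + qv*z0 + Qv*z1))*s^2
      + (5*k2*(pv*u1 + qv*v1) - 4*w1*(pv*s1 + qv*z1))*s^3 + 0*s^4 + 0*s^5) from
    funext fun s => by ring, deriv_poly5]
  ring


/-- Under the center condition `S¹c⁸`, the polynomial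
`Φ = 5·D·[(P+εp₁)·∂N/∂x + (Q+εq₁)·∂N/∂y] − 4·N·[(P+εp₁)·∂D/∂x + (Q+εq₁)·∂D/∂y]`
has identically vanishing coefficients at `ε⁰` and `ε¹` — its value and its
`ε`-derivative vanish at `ε = 0`, for every `(x,y)`.  Equivalently, the Lie derivative
of `H₁ = N⁵/D⁴` along the perturbed vector field `(P+εp₁, Q+εq₁)` is `O(ε²)`,
so `H₁` is an ε-order approximate first integral and the perturbed system is a center
up to ε-order. -/
theorem center_up_to_eps_order (a : ℝ) (ha : a < -(2:ℝ)^((5:ℝ)/4)) (a121 a211 : ℝ)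
    (x y : ℝ) :
    Φ a a121 a211 x y 0 = 0 ∧ deriv (fun ε => Φ a a121 a211 x y ε) 0 = 0 := by
  have hNx : ∀ ε : ℝ, deriv (fun x' => Nfun a a121 a211 x' y ε) x = ((8:ℝ)*x + (4:ℝ)*x^3) + ε*((5:ℝ)*a211 + (2:ℝ)*y*a211 + (-5:ℝ)*x*a121 + (-8/3:ℝ)*x*y*a121 + (-6:ℝ)*x^2*a211 + (-19/3:ℝ)*x^3*a121 + (4:ℝ)*a*a121 + (2:ℝ)*a*x*a211 + (-8:ℝ)*a*x^2*a121 + (2:ℝ)*a*x^3*a211 + (-1/3:ℝ)*a^2*x*a121 + (-1/3:ℝ)*a^2*x^3*a121 + (-1/2:ℝ)*a^3*x*a211 + (-1/2:ℝ)*a^3*x^3*a211 + (-1/4:ℝ)*a^4*x*a121 + (-1/4:ℝ)*a^4*x^3*a121) := by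
    intro ε
    rw [show (fun x' => Nfun a a121 a211 x' y ε)
        = (fun s : ℝ => ((-55/12:ℝ)*ε*a121 + (4:ℝ)*y + (-35/6:ℝ)*y*ε*a121 + (4/3:ℝ)*y^2*ε*a121 + (1/2:ℝ)*a*ε*a211 + (1:ℝ)*a*y*ε*a211 + (-5/12:ℝ)*a^2*ε*a121 + (-1/6:ℝ)*a^2*y*ε*a121 + (-5/8:ℝ)*a^3*ε*a211 + (-1/4:ℝ)*a^3*y*ε*a211 + (-5/16:ℝ)*a^4*ε*a121 + (-1/8:ℝ)*a^4*y*ε*a121) + ((5:ℝ)*ε*a211 + (2:ℝ)*y*ε*a211 + (4:ℝ)*a*ε*a121)*s + ((4:ℝ) + (-5/2:ℝ)*ε*a121 + (-4/3:ℝ)*y*ε*a121 + (1:ℝ)*a*ε*a211 + (-1/6:ℝ)*a^2*ε*a121 + (-1/4:ℝ)*a^3*ε*a211 + (-1/8:ℝ)*a^4*ε*a121)*s^2 + ((-2:ℝ)*ε*a211 + (-8/3:ℝ)*a*ε*a121)*s^3 + ((1:ℝ) + (-19/12:ℝ)*ε*a121 + (1/2:ℝ)*a*ε*a211 + (-1/12:ℝ)*a^2*ε*a121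 + (-1/8:ℝ)*a^3*ε*a211 + (-1/16:ℝ)*a^4*ε*a121)*s^4 + (0:ℝ)*s^5) from
      funext fun s => by simp only [Nfun, f₁, r1, r2]; ring, deriv_poly5]
    ring
  have hNy : ∀ ε : ℝ, deriv (fun y' => Nfun a a121 a211 x y' ε) y = ((4:ℝ)) + ε*((-35/6:ℝ)*a121 + (8/3:ℝ)*y*a121 + (2:ℝ)*x*a211 + (-4/3:ℝ)*x^2*a121 + (1:ℝ)*a*a211 + (-1/6:ℝ)*a^2*a121 + (-1/4:ℝ)*a^3*a211 + (-1/8:ℝ)*a^4*a121) := by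
    intro ε
    rw [show (fun y' => Nfun a a121 a211 x y' ε)
        = (fun s : ℝ => ((-55/12:ℝ)*ε*a121 + (5:ℝ)*x*ε*a211 + (4:ℝ)*x^2 + (-5/2:ℝ)*x^2*ε*a121 + (-2:ℝ)*x^3*ε*a211 + (1:ℝ)*x^4 + (-19/12:ℝ)*x^4*ε*a121 + (1/2:ℝ)*a*ε*a211 + (4:ℝ)*a*x*ε*a121 + (1:ℝ)*a*x^2*ε*a211 + (-8/3:ℝ)*a*x^3*ε*a121 + (1/2:ℝ)*a*x^4*ε*a211 + (-5/12:ℝ)*a^2*ε*a121 + (-1/6:ℝ)*a^2*x^2*ε*a121 + (-1/12:ℝ)*a^2*x^4*ε*a121 + (-5/8:ℝ)*a^3*ε*a211 + (-1/4:ℝ)*a^3*x^2*ε*a211 + (-1/8:ℝ)*a^3*x^4*ε*a211 + (-5/16:ℝ)*a^4*ε*a121 + (-1/8:ℝ)*a^4*x^2*ε*a121 + (-1/16:ℝ)*a^4*x^4*ε*a121) + ((4:ℝ) + (-35/6:ℝ)*ε*a121 + (2:ℝ)*x*ε*a211 + (-4/3:ℝ)*x^2*ε*a121 + (1:ℝ)*a*ε*a211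 + (-1/6:ℝ)*a^2*ε*a121 + (-1/4:ℝ)*a^3*ε*a211 + (-1/8:ℝ)*a^4*ε*a121)*s + ((4/3:ℝ)*ε*a121)*s^2 + (0:ℝ)*s^3 + (0:ℝ)*s^4 + (0:ℝ)*s^5) from
      funext fun s => by simp only [Nfun, f₁, r1, r2]; ring, deriv_poly5]
    ring
  have hDx : ∀ ε : ℝ, deriv (fun x' => Dfun a a121 a211 x' y ε) x = ((5/2:ℝ) + (5:ℝ)*y + (15:ℝ)*x^2 + (5:ℝ)*x^4) + ε*((-15/16:ℝ)*a121 + (-25/24:ℝ)*y*a121 + (5/3:ℝ)*y^2*a121 + (15/2:ℝ)*x*a211 + (5:ℝ)*x*y*a211 + (115/8:ℝ)*x^2*a121 + (-5:ℝ)*x^2*y*a121 + (-10:ℝ)*x^3*a211 + (-5/8:ℝ)*a*a211 + (-5/4:ℝ)*a*y*a211 + (10/3:ℝ)*a*x*a121 + (-15/4:ℝ)*a*x^2*a211 + (-40/3:ℝ)*a*x^3*a121 + (-5/16:ℝ)*a^2*a121 + (5/24:ℝ)*a^2*y*a121 + (5/8:ℝ)*a^2*x^2*a121 + (-15/32:ℝ)*a^3*a211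 + (5/16:ℝ)*a^3*y*a211 + (15/16:ℝ)*a^3*x^2*a211 + (-15/64:ℝ)*a^4*a121 + (5/32:ℝ)*a^4*y*a121 + (15/32:ℝ)*a^4*x^2*a121) := by
    intro ε
    rw [show (fun x' => Dfun a a121 a211 x' y ε)
        = (fun s : ℝ => ((1:ℝ)*a + (19/12:ℝ)*a*ε*a121 + (-10/3:ℝ)*a*y*ε*a121 + (-1/8:ℝ)*a^2*ε*a211 + (1/6:ℝ)*a^3*ε*a121 + (1/8:ℝ)*a^4*ε*a211 + (1/16:ℝ)*a^5*ε*a121) + ((5/2:ℝ) + (-15/16:ℝ)*ε*a121 + (5:ℝ)*y + (-25/24:ℝ)*y*ε*a121 + (5/3:ℝ)*y^2*ε*a121 + (-5/8:ℝ)*a*ε*a211 + (-5/4:ℝ)*a*y*ε*a211 + (-5/16:ℝ)*a^2*ε*a121 + (5/24:ℝ)*a^2*y*ε*a121 + (-15/32:ℝ)*a^3*ε*a211 + (5/16:ℝ)*a^3*y*ε*a211 + (-15/64:ℝ)*a^4*ε*a121 + (5/32:ℝ)*a^4*y*ε*a121)*s + ((15/4:ℝ)*ε*a211 + (5/2:ℝ)*y*ε*a211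 + (5/3:ℝ)*a*ε*a121)*s^2 + ((5:ℝ) + (115/24:ℝ)*ε*a121 + (-5/3:ℝ)*y*ε*a121 + (-5/4:ℝ)*a*ε*a211 + (5/24:ℝ)*a^2*ε*a121 + (5/16:ℝ)*a^3*ε*a211 + (5/32:ℝ)*a^4*ε*a121)*s^3 + ((-5/2:ℝ)*ε*a211 + (-10/3:ℝ)*a*ε*a121)*s^4 + ((1:ℝ))*s^5) from
      funext fun s => by simp only [Dfun, f₂, r1, r2, r3, r4]; ring, deriv_poly5]
    ring
  have hDy : ∀ ε : ℝ, deriv (fun y' => Dfun a a121 a211 x y' ε) y = ((5:ℝ)*x) + ε*((-25/24:ℝ)*x*a121 + (10/3:ℝ)*x*y*a121 + (5/2:ℝ)*x^2*a211 + (-5/3:ℝ)*x^3*a121 + (-10/3:ℝ)*a*a121 + (-5/4:ℝ)*a*x*a211 + (5/24:ℝ)*a^2*x*a121 + (5/16:ℝ)*a^3*x*a211 + (5/32:ℝ)*a^4*x*a121) := by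
    intro ε
    rw [show (fun y' => Dfun a a121 a211 x y' ε)
        = (fun s : ℝ => ((5/2:ℝ)*x + (-15/16:ℝ)*x*ε*a121 + (15/4:ℝ)*x^2*ε*a211 + (5:ℝ)*x^3 + (115/24:ℝ)*x^3*ε*a121 + (-5/2:ℝ)*x^4*ε*a211 + (1:ℝ)*x^5 + (1:ℝ)*a + (19/12:ℝ)*a*ε*a121 + (-5/8:ℝ)*a*x*ε*a211 + (5/3:ℝ)*a*x^2*ε*a121 + (-5/4:ℝ)*a*x^3*ε*a211 + (-10/3:ℝ)*a*x^4*ε*a121 + (-1/8:ℝ)*a^2*ε*a211 + (-5/16:ℝ)*a^2*x*ε*a121 + (5/24:ℝ)*a^2*x^3*ε*a121 + (1/6:ℝ)*a^3*ε*a121 + (-15/32:ℝ)*a^3*x*ε*a211 + (5/16:ℝ)*a^3*x^3*ε*a211 + (1/8:ℝ)*a^4*ε*a211 + (-15/64:ℝ)*a^4*x*ε*a121 + (5/32:ℝ)*a^4*x^3*ε*a121 + (1/16:ℝ)*a^5*ε*a121) + ((5:ℝ)*x + (-25/24:ℝ)*x*ε*a121 + (5/2:ℝ)*x^2*ε*a211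 + (-5/3:ℝ)*x^3*ε*a121 + (-10/3:ℝ)*a*ε*a121 + (-5/4:ℝ)*a*x*ε*a211 + (5/24:ℝ)*a^2*x*ε*a121 + (5/16:ℝ)*a^3*x*ε*a211 + (5/32:ℝ)*a^4*x*ε*a121)*s + ((5/3:ℝ)*x*ε*a121)*s^2 + (0:ℝ)*s^3 + (0:ℝ)*s^4 + (0:ℝ)*s^5) from
      funext fun s => by simp only [Dfun, f₂, r1, r2, r3, r4]; ring, deriv_poly5]
    ring
  have hΦ : ∀ ε : ℝ, Φ a a121 a211 x y ε =
    5*(f₂ a x y + ε*(a121 * r3 a x y + a211 * r4 a x y))*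
      ((P₀ a x y + ε * p1 a a121 a211 x y)*(((8:ℝ)*x + (4:ℝ)*x^3) + ε*((5:ℝ)*a211 + (2:ℝ)*y*a211 + (-5:ℝ)*x*a121 + (-8/3:ℝ)*x*y*a121 + (-6:ℝ)*x^2*a211 + (-19/3:ℝ)*x^3*a121 + (4:ℝ)*a*a121 + (2:ℝ)*a*x*a211 + (-8:ℝ)*a*x^2*a121 + (2:ℝ)*a*x^3*a211 + (-1/3:ℝ)*a^2*x*a121 + (-1/3:ℝ)*a^2*x^3*a121 + (-1/2:ℝ)*a^3*x*a211 + (-1/2:ℝ)*a^3*x^3*a211 + (-1/4:ℝ)*a^4*x*a121 + (-1/4:ℝ)*a^4*x^3*a121))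
        + (Q₀ a x y + ε * q1 a a121 a211 x y)*(((4:ℝ)) + ε*((-35/6:ℝ)*a121 + (8/3:ℝ)*y*a121 + (2:ℝ)*x*a211 + (-4/3:ℝ)*x^2*a121 + (1:ℝ)*a*a211 + (-1/6:ℝ)*a^2*a121 + (-1/4:ℝ)*a^3*a211 + (-1/8:ℝ)*a^4*a121)))
    - 4*(f₁ x y + ε*(a121 * r1 a x y + a211 * r2 a x y))*
      ((P₀ a x y + ε * p1 a a121 a211 x y)*(((5/2:ℝ) + (5:ℝ)*y + (15:ℝ)*x^2 + (5:ℝ)*x^4) + ε*((-15/16:ℝ)*a121 + (-25/24:ℝ)*y*a121 + (5/3:ℝ)*y^2*a121 + (15/2:ℝ)*x*a211 + (5:ℝ)*x*y*a211 + (115/8:ℝ)*x^2*a121 + (-5:ℝ)*x^2*y*a121 + (-10:ℝ)*x^3*a211 + (-5/8:ℝ)*a*a211 + (-5/4:ℝ)*a*y*a211 + (10/3:ℝ)*a*x*a121 + (-15/4:ℝ)*a*x^2*a211 + (-40/3:ℝ)*a*x^3*a121 + (-5/16:ℝ)*a^2*a121 + (5/24:ℝ)*a^2*y*a121 + (5/8:ℝ)*a^2*x^2*a121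 + (-15/32:ℝ)*a^3*a211 + (5/16:ℝ)*a^3*y*a211 + (15/16:ℝ)*a^3*x^2*a211 + (-15/64:ℝ)*a^4*a121 + (5/32:ℝ)*a^4*y*a121 + (15/32:ℝ)*a^4*x^2*a121))
        + (Q₀ a x y + ε * q1 a a121 a211 x y)*(((5:ℝ)*x) + ε*((-25/24:ℝ)*x*a121 + (10/3:ℝ)*x*y*a121 + (5/2:ℝ)*x^2*a211 + (-5/3:ℝ)*x^3*a121 + (-10/3:ℝ)*a*a121 + (-5/4:ℝ)*a*x*a211 + (5/24:ℝ)*a^2*x*a121 + (5/16:ℝ)*a^3*x*a211 + (5/32:ℝ)*a^4*x*a121))) := by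
    intro ε
    unfold Φ
    rw [hNx ε, hNy ε, hDx ε, hDy ε]
    unfold Nfun Dfun
    ring
  constructor
  · rw [hΦ 0]
    simp only [P₀, Q₀, f₁, f₂, r1, r2, r3, r4, p1, q1, a001, b001, b101, b011, b201,
      b111, b021, b301, b211, b121, b031, C1, C2, C3, C4, C5, C6, C7]
    ring
  · rw [funext hΦ, deriv_bilinear]
    simp only [P₀, Q₀, f₁, f₂, r1, r2, r3, r4, p1, q1, a001, b001, b101, b011, b201,
      b111, b021, b301, b211, b121, b031, C1, C2, C3, C4, C5, C6, C7]
    ring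

end
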